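/- For every C ≥ 10 and all vertices x,y ∈ V, the probability that ‖g(x) − g(y)‖₁ ≤ (1 − C·ε)·d_T(x,y) is at most k^{−C·d_T(x,y)/2}. -/

import Mathlib

open scoped Classical

noncomputable section

/-- A finite rooted metric tree.  Each non-root vertex `v` determines the edge
`(v, parent v)`; edges are identified with their lower endpoints. -/
structure FinTree : Type 1 where
  V : Type
  fin : Fintype V
  root : V
  parent : V → V
  parent_root : parent root = root
  reaches_root : ∀ v : V, ∃ n : ℕ, parent^[n] v = root
  len : V → ℝ
  len_nonneg : ∀ v : V, 0 ≤ len v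

attribute [instance] FinTree.fin

namespace FinTree

variable (T : FinTree)

/-- `u` is a (weak) ancestor of `v`. -/
def Anc (u v : T.V) : Prop := ∃ n : ℕ, T.parent^[n] v = u

/-- The set of edges (identified with their lower endpoints) on the path `P_v`
from the root to `v`. -/
def pathToRoot (v : T.V) : Finset T.V :=
  Finset.univ.filter fun u => u ≠ T.root ∧ T.Anc u v

/-- The set of edges on the unique path between `x` and `y`. -/
def pathEdges (x y : T.V) : Finset T.V :=
  (T.pathToRoot x \ T.pathToRoot y) ∪ (T.pathToRoot y \ T.pathToRoot x)

/-- The shortest-path pseudometric `d_T` of the tree. -/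
def dist (x y : T.V) : ℝ := ∑ e ∈ T.pathEdges x y, T.len e

/-- The set of all edges of the tree. -/
def edges : Finset T.V := Finset.univ.filter fun u => u ≠ T.root

/-- The depth of a vertex (number of edges on the path to the root). -/
def depth (v : T.V) : ℕ := Nat.find (T.reaches_root v)

/-- `x` lies on the path between `a` and `b`. -/
def OnPath (x a b : T.V) : Prop := T.pathEdges a x ⊆ T.pathEdges a b

/-- `T` is the complete `k`-ary tree of height `h` with unit edge lengths. -/
def IsCompleteKAry (k h : ℕ) : Prop :=
  (∀ v : T.V, v ≠ T.root → T.len v = 1) ∧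
  (∀ v : T.V, T.depth v ≤ h) ∧
  ∀ v : T.V, T.depth v < h →
    (Finset.univ.filter fun u : T.V => T.parent u = v ∧ u ≠ v).card = k

/-- A monotone coloring: every color class is a connected subset of the edge
set of some root-leaf path. -/
def IsMonotone (χ : T.V → ℕ) : Prop :=
  ∀ u v : T.V, u ≠ T.root → v ≠ T.root → χ u = χ v →
    (T.Anc u v ∨ T.Anc v u) ∧
      ∀ w : T.V, w ≠ T.root → T.Anc u w → T.Anc w v → χ w = χ u

/-- The multiplicity `M(χ)` of a coloring. -/
def mult (χ : T.V → ℕ) : ℕ :=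
  Finset.univ.sup fun v : T.V => ((T.pathToRoot v).image χ).card

/-- `len_χ(c)`: the total length of the color class of `c`. -/
def colorLen (χ : T.V → ℕ) (c : ℕ) : ℝ :=
  ∑ e ∈ T.edges.filter (fun e => χ e = c), T.len e

/-- The set of colors `C_χ(x,y;δ)`. -/
def sigColors (χ : T.V → ℕ) (x y : T.V) (δ : ℝ) : Finset ℕ :=
  (((T.pathToRoot x).image χ \ (T.pathToRoot y).image χ) ∪
      ((T.pathToRoot y).image χ \ (T.pathToRoot x).image χ)).filter
    fun c => (∑ e ∈ (T.pathEdges x y).filter (fun e => χ e = c), T.len e) ≤ δ * T.colorLen χ c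

/-- `ρ_χ(x,y;δ)`. -/
def rho (χ : T.V → ℕ) (x y : T.V) (δ : ℝ) : ℝ :=
  ∑ c ∈ T.sigColors χ x y δ, T.colorLen χ c

/-- The topmost edge of the color class of `c` (junk value if none exists). -/
def topEdge (χ : T.V → ℕ) (c : ℕ) : T.V :=
  if h : ∃ e : T.V, e ≠ T.root ∧ χ e = c ∧ ∀ e' : T.V, e' ≠ T.root → χ e' = c → T.Anc e e'
  then h.choose else T.root

/-- `v_c`: the vertex of `γ_c` closest to the root. -/
def vcol (χ : T.V → ℕ) (c : ℕ) : T.V := T.parent (T.topEdge χ c)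

/-- The edge set `E(T(c))` of the subtree under the color `c`; for the root
color `c₀` it is all of `E`. -/
def subEdges (χ : T.V → ℕ) (c₀ c : ℕ) : Finset T.V :=
  if c = c₀ then T.edges else T.edges.filter fun e => T.Anc (T.topEdge χ c) e

/-- The parent color `ρ(c) = χ(v_c, p(v_c))`, with the convention
`χ(r,r) = c₀`. -/
def parentColor (χ : T.V → ℕ) (c₀ c : ℕ) : ℕ :=
  if T.vcol χ c = T.root then c₀ else χ (T.vcol χ c)

/-- `κ(c) = ⌊log₂(|E(T(ρ(c)))| / |E(T(c))|)⌋ + 1`. -/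
def kappa (χ : T.V → ℕ) (c₀ c : ℕ) : ℤ :=
  ⌊Real.logb 2 (((T.subEdges χ c₀ (T.parentColor χ c₀ c)).card : ℝ) /
      ((T.subEdges χ c₀ c).card : ℝ))⌋ + 1

/-- `φ(c₀) = 0` and `φ(c) = κ(c) + φ(ρ(c))`; equivalently
`φ(c) = Σ_{c' ∈ χ(E(P_{v_c})) ∪ {c}} κ(c')`. -/
def phi (χ : T.V → ℕ) (c₀ c : ℕ) : ℤ :=
  if c = c₀ then 0
  else T.kappa χ c₀ c + ∑ c' ∈ (T.pathToRoot (T.vcol χ c)).image χ, T.kappa χ c₀ c'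

/-- `m(T)`: the minimum positive edge length. -/
def minLen : ℝ := sInf {x : ℝ | ∃ e : T.V, e ≠ T.root ∧ 0 < T.len e ∧ T.len e = x}

/-- `⌊log₂( m(T) / (M(χ) + log₂|E|) )⌋`, the scale below which all `τ_i` vanish. -/
def iMin (χ : T.V → ℕ) : ℤ :=
  ⌊Real.logb 2 (T.minLen / ((T.mult χ : ℝ) + Real.logb 2 (T.edges.card : ℝ)))⌋

/-- `τ` is the family of scale selectors: `τ_i(v) = 0` for `i < iMin`, and for
`i ≥ iMin`,
`τ_i(v) = min( ⌈(d_T(v,v_c) − min(d_T(v,v_c), Σ_{j<i} 2^j τ_j(v)))/2^i⌉,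
               φ(c) − Σ_{c' ∈ χ(E(P_v))} τ_i(v_{c'}) )` where `c = χ(v,p(v))`. -/
def IsScaleSelector (χ : T.V → ℕ) (c₀ : ℕ) (τ : ℤ → T.V → ℕ) : Prop :=
  (∀ v : T.V, ∀ i : ℤ, i < T.iMin χ → τ i v = 0) ∧
  ∀ v : T.V, v ≠ T.root → ∀ i : ℤ, T.iMin χ ≤ i →
    (τ i v : ℤ) =
      min
        ⌈(T.dist v (T.vcol χ (χ v)) -
            min (T.dist v (T.vcol χ (χ v)))
              (∑ j ∈ Finset.Ico (T.iMin χ) i, (2 : ℝ) ^ j * (τ j v : ℝ))) / (2 : ℝ) ^ i⌉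
        (T.phi χ c₀ (χ v) - ∑ c' ∈ (T.pathToRoot v).image χ, (τ i (T.vcol χ c') : ℤ))

/-- The matrix `Δ_i(v) ∈ ℝ^{m×t}`. -/
def Delta (χ : T.V → ℕ) (c₀ : ℕ) (τ : ℤ → T.V → ℕ) (m t : ℕ) (i : ℤ) (v : T.V) :
    Matrix (Fin m) (Fin t) ℝ := fun j k =>
  let d : ℝ := T.dist v (T.vcol χ (χ v))
  let s : ℝ := ∑ l ∈ Finset.Ico (T.iMin χ) i, (2 : ℝ) ^ l * (τ l v : ℝ)
  let α : ℤ := ∑ c' ∈ (T.pathToRoot v).image χ, ((t : ℤ) ^ 2 * (τ i (T.vcol χ c') : ℤ))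
  let β : ℤ := α + min ((t : ℤ) ^ 2 * (τ i v : ℤ)) ⌊(d - s) * (t : ℝ) ^ 2 / (2 : ℝ) ^ i⌋
  if (k : ℕ) = 0 then
    if α < (j : ℤ) + 1 ∧ (j : ℤ) + 1 ≤ β then (2 : ℝ) ^ i / (t : ℝ) ^ 2
    else if (j : ℤ) + 1 = β + 1 ∧ β - α < (t : ℤ) ^ 2 * (τ i v : ℤ) then
      d - (s + ((β - α : ℤ) : ℝ) * ((2 : ℝ) ^ i / (t : ℝ) ^ 2))
    else 0
  else 0

end FinTree

/-- The entrywise ℓ₁ norm of a matrix. -/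
def matOne {m t : ℕ} (A : Matrix (Fin m) (Fin t) ℝ) : ℝ := ∑ j, ∑ k, |A j k|


namespace FinTree
variable (T : FinTree)

lemma iterate_root (n : ℕ) : T.parent^[n] T.root = T.root :=
  Function.iterate_fixed T.parent_root n

lemma depth_spec (v : T.V) : T.parent^[T.depth v] v = T.root :=
  Nat.find_spec (T.reaches_root v)

lemma depth_le {v : T.V} {n : ℕ} (h : T.parent^[n] v = T.root) : T.depth v ≤ n :=
  Nat.find_min' (T.reaches_root v) h

lemma depth_min {v : T.V} {n : ℕ} (h : n < T.depth v) : T.parent^[n] v ≠ T.root :=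
  Nat.find_min (T.reaches_root v) h

lemma depth_root : T.depth T.root = 0 :=
  Nat.le_zero.mp (T.depth_le (by simp))

lemma iterate_ge {v : T.V} {n : ℕ} (h : T.depth v ≤ n) : T.parent^[n] v = T.root := by
  have : T.parent^[n - T.depth v + T.depth v] v = T.root := by
    rw [Function.iterate_add_apply, T.depth_spec, T.iterate_root]
  rwa [Nat.sub_add_cancel h] at this

lemma depth_iterate {v : T.V} {j : ℕ} (h : j ≤ T.depth v) :
    T.depth (T.parent^[j] v) = T.depth v - j := by
  have h1 : T.depth (T.parent^[j] v) ≤ T.depth v - j := by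
    apply T.depth_le
    rw [← Function.iterate_add_apply]
    exact T.iterate_ge (by omega)
  have h2 : ¬ (T.depth (T.parent^[j] v) < T.depth v - j) := by
    intro hlt
    have := T.depth_min (v := v) (n := T.depth (T.parent^[j] v) + j) (by omega)
    exact this (by rw [Function.iterate_add_apply]; exact T.depth_spec _)
  omega

/-- the `(i+1)`-st edge (lower endpoint) on the root-`v` path -/
def pe (v : T.V) (i : ℕ) : T.V := T.parent^[T.depth v - (i+1)] v

lemma depth_pe {v : T.V} {i : ℕ} (h : i < T.depth v) : T.depth (T.pe v i) = i + 1 := by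
  rw [pe, T.depth_iterate (by omega)]; omega

lemma pe_ne_root {v : T.V} {i : ℕ} (h : i < T.depth v) : T.pe v i ≠ T.root := by
  intro hc
  have := T.depth_pe h
  rw [hc, T.depth_root] at this
  omega

lemma pe_prefix {v : T.V} {i i' : ℕ} (h : i ≤ i') (h' : i' < T.depth v) :
    T.pe v i = T.parent^[i' - i] (T.pe v i') := by
  rw [pe, pe, ← Function.iterate_add_apply]
  congr 1
  omega

lemma pathToRoot_eq (v : T.V) :
    T.pathToRoot v = (Finset.range (T.depth v)).image (T.pe v) := by
  ext u
  simp only [pathToRoot, Finset.mem_filter, Finset.mem_univ, true_and, Finset.mem_image,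
    Finset.mem_range]
  constructor
  · rintro ⟨hu, n, hn⟩
    have hnd : n < T.depth v := by
      by_contra hge
      exact hu (by rw [← hn]; exact T.iterate_ge (by omega))
    exact ⟨T.depth v - n - 1, by omega, by rw [pe]; rw [← hn]; congr 1; omega⟩
  · rintro ⟨i, hi, rfl⟩
    exact ⟨T.pe_ne_root hi, ⟨T.depth v - (i+1), rfl⟩⟩

lemma pe_inj {v : T.V} {i i' : ℕ} (hi : i < T.depth v) (hi' : i' < T.depth v)
    (h : T.pe v i = T.pe v i') : i = i' := by
  have := T.depth_pe hi
  rw [h, T.depth_pe hi'] at this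
  omega

lemma pe_cross {u v : T.V} {i i' : ℕ} (hi : i < T.depth u) (hi' : i' < T.depth v)
    (h : T.pe u i = T.pe v i') : i = i' := by
  have := T.depth_pe hi
  rw [h, T.depth_pe hi'] at this
  omega

lemma card_pathToRoot (v : T.V) : (T.pathToRoot v).card = T.depth v := by
  rw [T.pathToRoot_eq, Finset.card_image_of_injOn, Finset.card_range]
  intro i hi i' hi' h
  exact T.pe_inj (Finset.mem_range.mp hi) (Finset.mem_range.mp hi') h

end FinTree

namespace FinTree
variable (T : FinTree)

lemma pe_agree_prefix {x y : T.V} {i i' : ℕ} (h : i ≤ i') (hx : i' < T.depth x)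
    (hy : i' < T.depth y) (hagree : T.pe x i' = T.pe y i') : T.pe x i = T.pe y i := by
  rw [T.pe_prefix h hx, T.pe_prefix h hy, hagree]

lemma inter_pathToRoot (x y : T.V) :
    T.pathToRoot x ∩ T.pathToRoot y =
      ((Finset.range (min (T.depth x) (T.depth y))).filter
        (fun i => T.pe x i = T.pe y i)).image (T.pe x) := by
  ext u
  simp only [Finset.mem_inter, T.pathToRoot_eq, Finset.mem_image, Finset.mem_filter,
    Finset.mem_range]
  constructor
  · rintro ⟨⟨i, hi, rfl⟩, ⟨i', hi', hagree⟩⟩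
    have hii : i' = i := T.pe_cross hi' hi hagree
    subst hii
    exact ⟨i', ⟨by omega, hagree.symm⟩, rfl⟩
  · rintro ⟨i, ⟨hi, hagree⟩, rfl⟩
    exact ⟨⟨i, by omega, rfl⟩, ⟨i, by omega, hagree.symm⟩⟩

lemma card_inter_pathToRoot (x y : T.V) :
    (T.pathToRoot x ∩ T.pathToRoot y).card =
      ((Finset.range (min (T.depth x) (T.depth y))).filter
        (fun i => T.pe x i = T.pe y i)).card := by
  rw [T.inter_pathToRoot]
  apply Finset.card_image_of_injOn
  intro i hi i' hi' h
  simp only [Finset.mem_coe, Finset.mem_filter, Finset.mem_range] at hi hi'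
  exact T.pe_inj (by omega) (by omega) h

lemma card_pathEdges (x y : T.V) :
    (T.pathEdges x y).card =
      T.depth x + T.depth y - 2 * (T.pathToRoot x ∩ T.pathToRoot y).card := by
  have hsub : T.pathToRoot x ∩ T.pathToRoot y ⊆ T.pathToRoot x := Finset.inter_subset_left
  have hsub' : T.pathToRoot y ∩ T.pathToRoot x ⊆ T.pathToRoot y := Finset.inter_subset_left
  have hd : Disjoint (T.pathToRoot x \ T.pathToRoot y) (T.pathToRoot y \ T.pathToRoot x) := by
    apply Finset.disjoint_left.mpr
    intro a ha hb
    simp only [Finset.mem_sdiff] at ha hb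
    exact hb.2 ha.1
  have h1 : (T.pathToRoot x \ T.pathToRoot y).card
      = T.depth x - (T.pathToRoot x ∩ T.pathToRoot y).card := by
    have := Finset.card_sdiff_add_card_inter (T.pathToRoot x) (T.pathToRoot y)
    rw [T.card_pathToRoot] at this
    omega
  have h2 : (T.pathToRoot y \ T.pathToRoot x).card
      = T.depth y - (T.pathToRoot x ∩ T.pathToRoot y).card := by
    have := Finset.card_sdiff_add_card_inter (T.pathToRoot y) (T.pathToRoot x)
    rw [T.card_pathToRoot, Finset.inter_comm] at this
    omega
  have hle : (T.pathToRoot x ∩ T.pathToRoot y).card ≤ min (T.depth x) (T.depth y) := by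
    have hle1 := Finset.card_le_card
      (Finset.inter_subset_left (s₁ := T.pathToRoot x) (s₂ := T.pathToRoot y))
    have hle2 := Finset.card_le_card
      (Finset.inter_subset_right (s₁ := T.pathToRoot x) (s₂ := T.pathToRoot y))
    rw [T.card_pathToRoot] at hle1 hle2
    omega
  rw [pathEdges, Finset.card_union_of_disjoint hd, h1, h2]
  omega

end FinTree



lemma pow_self_le_factorial_mul_exp (K : ℕ) :
    (K : ℝ) ^ K ≤ (K.factorial : ℝ) * Real.exp K := by
  induction K with
  | zero => simp
  | succ n ih =>
    have hn : ((n:ℝ)+1) ^ n ≤ (n:ℝ) ^ n * Real.exp 1 := by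
      rcases Nat.eq_zero_or_pos n with h | h
      · subst h; simp
      · have hnp : (0:ℝ) < n := by exact_mod_cast h
        have h1 : ((n:ℝ)+1) = n * (1 + 1/n) := by field_simp
        have h2 : (1 + 1/(n:ℝ)) ≤ Real.exp (1/n) := by
          have := Real.add_one_le_exp (1/(n:ℝ)); linarith
        calc ((n:ℝ)+1)^n = (n:ℝ)^n * (1+1/(n:ℝ))^n := by
              rw [h1, mul_pow]
          _ ≤ (n:ℝ)^n * (Real.exp (1/n))^n := by
              gcongr
          _ = (n:ℝ)^n * Real.exp 1 := by
              rw [← Real.exp_nat_mul]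
              congr 1
              field_simp
    have hfact : (Nat.factorial (n+1) : ℝ) = (n+1) * Nat.factorial n := by
      push_cast [Nat.factorial_succ]; ring
    have key : ((n:ℝ)+1) ^ (n+1) ≤ (Nat.factorial (n+1) : ℝ) * Real.exp (n+1) := by
      calc ((n:ℝ)+1) ^ (n+1) = ((n:ℝ)+1) * ((n:ℝ)+1)^n := by ring
        _ ≤ ((n:ℝ)+1) * ((n:ℝ)^n * Real.exp 1) := by
            gcongr
        _ ≤ ((n:ℝ)+1) * ((Nat.factorial n * Real.exp n) * Real.exp 1) := by
            have h3 : (0:ℝ) < Real.exp 1 := Real.exp_pos 1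
            have hnn : (0:ℝ) ≤ (n:ℝ)+1 := by positivity
            gcongr
        _ = (Nat.factorial (n+1) : ℝ) * Real.exp (n+1) := by
            rw [hfact, Real.exp_add]; ring
    calc ((n+1 : ℕ) : ℝ) ^ (n+1) = ((n:ℝ)+1) ^ (n+1) := by push_cast; ring
      _ ≤ (Nat.factorial (n+1) : ℝ) * Real.exp (n+1) := key
      _ = (Nat.factorial (n+1) : ℝ) * Real.exp ((n+1 : ℕ) : ℝ) := by push_cast; ring_nf


lemma card_fixed_on {α β : Type*} [Fintype α] [Fintype β] (Q : Finset α) (c : β) :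
    (Finset.univ.filter fun f : α → β => ∀ a ∈ Q, f a = c).card =
      Fintype.card β ^ (Fintype.card α - Q.card) := by
  classical
  have e : {f : α → β // ∀ a ∈ Q, f a = c} ≃ ({a : α // a ∉ Q} → β) :=
    { toFun := fun f a => f.1 a.1
      invFun := fun g => ⟨fun a => if h : a ∈ Q then c else g ⟨a, h⟩, by
        intro a ha; simp [ha]⟩
      left_inv := by
        intro f; ext a
        by_cases h : a ∈ Q
        · simp [h, f.2 a h]
        · simp [h]
      right_inv := by
        intro g; ext a
        simp [a.2] }
  have h1 : (Finset.univ.filter fun f : α → β => ∀ a ∈ Q, f a = c).card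
      = Fintype.card {f : α → β // ∀ a ∈ Q, f a = c} := (Fintype.card_subtype _).symm
  rw [h1, Fintype.card_congr e, Fintype.card_fun]
  congr 1
  have : Fintype.card {a : α // a ∉ Q} = Fintype.card α - Fintype.card {a : α // a ∈ Q} :=
    Fintype.card_subtype_compl _
  rw [this, Fintype.card_coe]


lemma sum_abs_pair {t : ℕ} (P Q : Prop) [Decidable P] [Decidable Q] (a b : Fin t) (r : ℝ)
    (hr : 0 ≤ r) :
    ∑ c : Fin t, |(if P ∧ a = c then r else 0) - (if Q ∧ b = c then r else 0)| =
      if P ∧ Q then (if a = b then 0 else 2 * r) else if P ∨ Q then r else 0 := by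
  by_cases hP : P <;> by_cases hQ : Q
  · simp only [hP, hQ, true_and, and_self, if_true, true_or]
    by_cases hab : a = b
    · subst hab
      simp
    · rw [if_neg hab]
      have hcongr : ∀ c : Fin t, |(if a = c then r else 0) - (if b = c then r else 0)| =
          (if a = c then r else 0) + (if b = c then r else 0) := by
        intro c
        by_cases h1 : a = c <;> by_cases h2 : b = c
        · exact absurd (h1.trans h2.symm) hab
        · simp [h1, h2, abs_of_nonneg hr]
        · simp [h1, h2, abs_of_nonneg hr]
        · simp [h1, h2]
      rw [Finset.sum_congr rfl (fun c _ => hcongr c), Finset.sum_add_distrib,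
        Finset.sum_ite_eq, Finset.sum_ite_eq]
      simp [two_mul]
  · have hcongr : ∀ c : Fin t, |(if P ∧ a = c then r else 0) - (if Q ∧ b = c then r else 0)| =
        (if a = c then r else 0) := by
      intro c
      by_cases h1 : a = c <;> simp [hP, hQ, h1, abs_of_nonneg hr]
    rw [Finset.sum_congr rfl (fun c _ => hcongr c), Finset.sum_ite_eq]
    simp [hP, hQ]
  · have hcongr : ∀ c : Fin t, |(if P ∧ a = c then r else 0) - (if Q ∧ b = c then r else 0)| =
        (if b = c then r else 0) := by
      intro c
      by_cases h1 : b = c <;> simp [hP, hQ, h1, abs_of_nonneg hr]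
    rw [Finset.sum_congr rfl (fun c _ => hcongr c), Finset.sum_ite_eq]
    simp [hP, hQ]
  · simp [hP, hQ]

namespace FinTree
variable (T : FinTree)

lemma dist_eq_card (hlen : ∀ v : T.V, v ≠ T.root → T.len v = 1) (x y : T.V) :
    T.dist x y = ((T.pathEdges x y).card : ℝ) := by
  have hne : ∀ e ∈ T.pathEdges x y, e ≠ T.root := by
    intro e he
    rcases Finset.mem_union.mp he with h | h <;>
    · have := (Finset.mem_sdiff.mp h).1
      simp only [pathToRoot, Finset.mem_filter] at this
      exact this.2.1
  rw [dist, Finset.sum_congr rfl (fun e he => hlen e (hne e he))]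
  simp

lemma norm_eq (x y : T.V) (h m t : ℕ) (hm : 1 ≤ m)
    (hx : T.depth x ≤ h) (hy : T.depth y ≤ h) (ω : (T.V × Fin m) → Fin t) :
    (∑ p : Fin h × Fin m × Fin t,
      |(if (p.1 : ℕ) < T.depth x ∧
            ω (T.parent^[T.depth x - ((p.1 : ℕ) + 1)] x, p.2.1) = p.2.2
          then 1 / (m : ℝ) else 0) -
        (if (p.1 : ℕ) < T.depth y ∧
            ω (T.parent^[T.depth y - ((p.1 : ℕ) + 1)] y, p.2.1) = p.2.2
          then 1 / (m : ℝ) else 0)|) =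
      ((T.pathEdges x y).card : ℝ) -
        (2 / m) * ((((Finset.range (min (T.depth x) (T.depth y))).filter
            (fun i => T.pe x i ≠ T.pe y i) ×ˢ (Finset.univ : Finset (Fin m))).filter
            (fun p => ω (T.pe x p.1, p.2) = ω (T.pe y p.1, p.2))).card : ℝ) := by
  classical
  set dx := T.depth x with hdxd
  set dy := T.depth y with hdyd
  set n0 := min dx dy with hn0d
  set mx := max dx dy with hmxd
  have hmr : (0:ℝ) < m := by exact_mod_cast hm
  set cnt : ℕ → ℕ := fun i =>
    (Finset.univ.filter (fun j : Fin m => ω (T.pe x i, j) = ω (T.pe y i, j))).card with hcnt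
  set F : ℕ → ℝ := fun i =>
    if i < n0 then (if T.pe x i = T.pe y i then 0 else 2 - (2 / m) * cnt i)
    else if i < mx then 1 else 0 with hF
  have step1 : (∑ p : Fin h × Fin m × Fin t,
      |(if (p.1 : ℕ) < dx ∧
            ω (T.parent^[dx - ((p.1 : ℕ) + 1)] x, p.2.1) = p.2.2
          then 1 / (m : ℝ) else 0) -
        (if (p.1 : ℕ) < dy ∧
            ω (T.parent^[dy - ((p.1 : ℕ) + 1)] y, p.2.1) = p.2.2
          then 1 / (m : ℝ) else 0)|) = ∑ i ∈ Finset.range h, F i := by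
    rw [Fintype.sum_prod_type]
    rw [← Fin.sum_univ_eq_sum_range F h]
    apply Finset.sum_congr rfl
    intro i _
    rw [Fintype.sum_prod_type]
    have hinner : ∀ j : Fin m, (∑ c : Fin t,
        |(if (i : ℕ) < dx ∧ ω (T.parent^[dx - ((i : ℕ) + 1)] x, j) = c
            then 1 / (m : ℝ) else 0) -
          (if (i : ℕ) < dy ∧ ω (T.parent^[dy - ((i : ℕ) + 1)] y, j) = c
            then 1 / (m : ℝ) else 0)|) =
        if (i : ℕ) < dx ∧ (i : ℕ) < dy then
          (if ω (T.pe x i, j) = ω (T.pe y i, j) then 0 else 2 * (1 / (m : ℝ)))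
        else if (i : ℕ) < dx ∨ (i : ℕ) < dy then 1 / (m : ℝ) else 0 := by
      intro j
      exact sum_abs_pair ((i : ℕ) < dx) ((i : ℕ) < dy)
        (ω (T.pe x i, j)) (ω (T.pe y i, j)) (1 / (m : ℝ)) (by positivity)
    rw [Finset.sum_congr rfl (fun j _ => hinner j)]
    by_cases h1 : (i : ℕ) < dx <;> by_cases h2 : (i : ℕ) < dy
    · -- both
      have hn : (i : ℕ) < n0 := lt_min h1 h2
      simp only [h1, h2, and_self, if_true, hF, hn]
      by_cases heq : T.pe x (i : ℕ) = T.pe y (i : ℕ)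
      · simp [heq]
      · rw [if_neg heq, Finset.sum_ite, Finset.sum_const, Finset.sum_const]
        have hcard : (Finset.univ.filter
            (fun j : Fin m => ¬ ω (T.pe x (i:ℕ), j) = ω (T.pe y (i:ℕ), j))).card
            = m - cnt (i : ℕ) := by
          have h2 : cnt (i : ℕ) + (Finset.univ.filter
              (fun j : Fin m => ¬ ω (T.pe x (i:ℕ), j) = ω (T.pe y (i:ℕ), j))).card = m := by
            simp only [hcnt]
            have := Finset.card_filter_add_card_filter_not
              (s := (Finset.univ : Finset (Fin m)))
              (p := fun j : Fin m => ω (T.pe x (i:ℕ), j) = ω (T.pe y (i:ℕ), j))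
            simpa using this
          omega
        have hcle : cnt (i : ℕ) ≤ m := by
          have := Finset.card_filter_le (Finset.univ : Finset (Fin m))
            (fun j : Fin m => ω (T.pe x (i:ℕ), j) = ω (T.pe y (i:ℕ), j))
          simpa using this
        rw [hcard]
        rw [smul_zero, zero_add, nsmul_eq_mul, Nat.cast_sub hcle]
        field_simp
    · have hn : ¬ ((i : ℕ) < n0) := by omega
      have hm' : (i : ℕ) < mx := by omega
      simp only [h1, h2, and_false, if_false, true_or, if_true, hF, hn, hm',
        Finset.sum_const, Finset.card_univ, Fintype.card_fin, nsmul_eq_mul]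
      field_simp
    · have hn : ¬ ((i : ℕ) < n0) := by omega
      have hm' : (i : ℕ) < mx := by omega
      simp only [h1, h2, false_and, if_false, or_true, if_true, hF, hn, hm',
        Finset.sum_const, Finset.card_univ, Fintype.card_fin, nsmul_eq_mul]
      field_simp
    · have hn : ¬ ((i : ℕ) < n0) := by omega
      have hm' : ¬ ((i : ℕ) < mx) := by omega
      simp [h1, h2, hF, hn, hm']
  rw [step1]
  -- now compute the range-h sum
  set L := (Finset.range n0).filter (fun i => T.pe x i = T.pe y i) with hL
  set Df := (Finset.range n0).filter (fun i => ¬ T.pe x i = T.pe y i) with hDf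
  have hn0mx : n0 ≤ mx := min_le_max
  have hmxh : mx ≤ h := max_le hx hy
  have hsplit : ∑ i ∈ Finset.range h, F i =
      (∑ i ∈ Finset.range n0, F i) + (∑ i ∈ Finset.Ico n0 mx, F i)
        + (∑ i ∈ Finset.Ico mx h, F i) := by
    rw [Finset.range_eq_Ico, ← Finset.sum_Ico_consecutive F (Nat.zero_le n0)
      (le_trans hn0mx hmxh), ← Finset.sum_Ico_consecutive F hn0mx hmxh,
      ← Finset.range_eq_Ico]
    ring
  have hIco2 : ∑ i ∈ Finset.Ico mx h, F i = 0 := by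
    apply Finset.sum_eq_zero
    intro i hi
    have := (Finset.mem_Ico.mp hi).1
    simp only [hF]
    rw [if_neg (by omega), if_neg (by omega)]
  have hIco1 : ∑ i ∈ Finset.Ico n0 mx, F i = ((mx - n0 : ℕ) : ℝ) := by
    rw [Finset.sum_congr rfl (fun i hi => ?_), Finset.sum_const, Nat.card_Ico,
      nsmul_eq_mul, mul_one]
    have h1 := (Finset.mem_Ico.mp hi).1
    have h2 := (Finset.mem_Ico.mp hi).2
    simp only [hF]
    rw [if_neg (by omega), if_pos (by omega)]
  have hrange : ∑ i ∈ Finset.range n0, F i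
      = ∑ i ∈ Df, (2 - (2 / (m:ℝ)) * (cnt i : ℝ)) := by
    rw [← Finset.sum_filter_add_sum_filter_not (Finset.range n0)
      (fun i => T.pe x i = T.pe y i) F]
    have hzero : ∑ i ∈ L, F i = 0 := by
      apply Finset.sum_eq_zero
      intro i hi
      rw [Finset.mem_filter, Finset.mem_range] at hi
      simp only [hF]
      rw [if_pos hi.1, if_pos hi.2]
    rw [hzero, zero_add]
    apply Finset.sum_congr rfl
    intro i hi
    rw [Finset.mem_filter, Finset.mem_range] at hi
    simp only [hF]
    rw [if_pos hi.1, if_neg hi.2]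
  have hcoll : ((Df ×ˢ (Finset.univ : Finset (Fin m))).filter
      (fun p => ω (T.pe x p.1, p.2) = ω (T.pe y p.1, p.2))).card
      = ∑ i ∈ Df, cnt i := by
    rw [Finset.card_filter, Finset.sum_product]
    apply Finset.sum_congr rfl
    intro i _
    simp only [hcnt]
    rw [Finset.card_filter]
  have hDsum : ∑ i ∈ Df, (2 - (2 / m) * (cnt i : ℝ)) =
      2 * Df.card - (2 / m) * ((∑ i ∈ Df, cnt i : ℕ) : ℝ) := by
    rw [Finset.sum_sub_distrib, Finset.sum_const, ← Finset.mul_sum]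
    push_cast
    ring
  -- cardinal identities
  have hLD : L.card + Df.card = n0 := by
    have := Finset.card_filter_add_card_filter_not
      (s := Finset.range n0) (p := fun i => T.pe x i = T.pe y i)
    rw [Finset.card_range] at this
    exact this
  have hinter : (T.pathToRoot x ∩ T.pathToRoot y).card = L.card := T.card_inter_pathToRoot x y
  have hLn0 : L.card ≤ n0 := by omega
  have hcardPE : (T.pathEdges x y).card = dx + dy - 2 * L.card := by
    rw [T.card_pathEdges, hinter]
  have hcast : ((T.pathEdges x y).card : ℝ) = ((mx - n0 : ℕ) : ℝ) + 2 * Df.card := by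
    rw [hcardPE]
    have h2L : 2 * L.card ≤ dx + dy := by omega
    rw [Nat.cast_sub h2L, Nat.cast_sub hn0mx]
    have : dx + dy = mx + n0 := by omega
    rw [this]
    push_cast
    have : (Df.card : ℝ) = (n0 : ℝ) - L.card := by
      have : (L.card : ℝ) + Df.card = n0 := by exact_mod_cast hLD
      linarith
    rw [this]
    ring
  rw [hsplit, hIco1, hIco2, hrange, hDsum, hcoll, hcast]
  push_cast
  ring

end FinTree

set_option maxHeartbeats 2000000 in
/-- A single contraction event for the random embedding of the complete `k`-ary
tree: `ℙ[‖g(x)−g(y)‖₁ ≤ (1−Cε)d_T(x,y)] ≤ k^{−C·d_T(x,y)/2}` for `C ≥ 10`. -/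
theorem kary_contraction_probability (k h : ℕ) (hk : 2 ≤ k) (hh : 1 ≤ h)
    (T : FinTree) (hT : T.IsCompleteKAry k h)
    (ε : ℝ) (hε : 0 < ε) (C : ℝ) (hC : 10 ≤ C) (x y : T.V) :
    let t : ℕ := ⌈1 / ε⌉₊
    let m : ℕ := t * ⌈Real.log k⌉₊
    -- the random map `g`, determined by the i.i.d. uniform labels
    -- `ω : T.V × Fin m → Fin t` (the label of the edge `e` in row `j` is the basis
    -- vector `e_{ω(e,j)}/m`); block `p.1` of `g(v)` is the label of the
    -- `(p.1+1)`-st edge on the root-`v` path, and is zero for `p.1 ≥ depth v`.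
    let g : ((T.V × Fin m) → Fin t) → T.V → Fin h × Fin m × Fin t → ℝ :=
      fun ω v p =>
        if (p.1 : ℕ) < T.depth v ∧
            ω (T.parent^[T.depth v - ((p.1 : ℕ) + 1)] v, p.2.1) = p.2.2
        then 1 / (m : ℝ) else 0
    ((Finset.univ.filter fun ω : (T.V × Fin m) → Fin t =>
        (∑ p : Fin h × Fin m × Fin t, |g ω x p - g ω y p|) ≤
          (1 - C * ε) * T.dist x y).card : ℝ) /
        (Fintype.card ((T.V × Fin m) → Fin t)) ≤
      (k : ℝ) ^ (-(C * T.dist x y / 2)) := by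
  intro t m g
  classical
  have htceil : (1 : ℝ) / ε ≤ (t : ℝ) := Nat.le_ceil _
  have ht0 : 0 < t := by
    have : (0:ℝ) < 1/ε := by positivity
    exact_mod_cast Nat.ceil_pos.mpr this
  have hεt : 1 ≤ ε * t := by
    have h1 : ε * (1/ε) ≤ ε * t := by
      apply mul_le_mul_of_nonneg_left htceil hε.le
    rwa [mul_one_div_cancel hε.ne'] at h1
  have hk0 : (0:ℝ) < (k:ℝ) := by positivity
  have hk1 : (1:ℝ) < (k:ℝ) := by exact_mod_cast hk
  have hlogk : 0 < Real.log k := Real.log_pos hk1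
  have hlogceil : Real.log k ≤ (⌈Real.log k⌉₊ : ℝ) := Nat.le_ceil _
  have hlk : 1 ≤ ⌈Real.log k⌉₊ := Nat.ceil_pos.mpr hlogk
  have hm0 : 0 < m := Nat.mul_pos ht0 hlk
  have hmt : m = t * ⌈Real.log k⌉₊ := rfl
  have hdx : T.depth x ≤ h := hT.2.1 x
  have hdy : T.depth y ≤ h := hT.2.1 y
  set d := (T.pathEdges x y).card with hdd
  have hdist : T.dist x y = (d : ℝ) := T.dist_eq_card hT.1 x y
  set n0 := min (T.depth x) (T.depth y) with hn0
  set Df := (Finset.range n0).filter (fun i => ¬ T.pe x i = T.pe y i) with hDf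
  set s := Df.card with hs
  set N := Fintype.card T.V * m with hN
  set K := ⌈C * ε * d * m / 2⌉₊ with hK
  set P := Df ×ˢ (Finset.univ : Finset (Fin m)) with hP
  have hcardfun : (Fintype.card ((T.V × Fin m) → Fin t)) = t ^ N := by
    rw [Fintype.card_fun, Fintype.card_prod]
    simp [hN]
  have hRHSpos : (0:ℝ) < (k : ℝ) ^ (-(C * T.dist x y / 2)) :=
    Real.rpow_pos_of_pos hk0 _
  -- key facts about s and d
  have hn0x : n0 ≤ T.depth x := min_le_left _ _
  have hn0y : n0 ≤ T.depth y := min_le_right _ _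
  have hLDf : ((Finset.range n0).filter (fun i => T.pe x i = T.pe y i)).card + s = n0 := by
    rw [hs, hDf]
    have h3 := Finset.card_filter_add_card_filter_not
      (s := Finset.range n0) (p := fun i => T.pe x i = T.pe y i)
    rw [Finset.card_range] at h3
    exact h3
  have hs2 : 2 * s ≤ d := by
    have h1 := T.card_pathEdges x y
    have h2 := T.card_inter_pathToRoot x y
    rw [← hn0] at h2
    omega
  have hsV : s ≤ Fintype.card T.V := by
    have h1 : Df.card ≤ (Finset.univ : Finset T.V).card := by
      apply Finset.card_le_card_of_injOn (fun i => T.pe x i)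
      · intro i _
        exact Finset.mem_univ _
      · intro i hi j hj hij
        rw [Finset.mem_coe, hDf, Finset.mem_filter, Finset.mem_range] at hi hj
        exact T.pe_inj (by omega) (by omega) hij
    rwa [Finset.card_univ] at h1
  -- event membership gives many collisions
  have hmem : ∀ ω : (T.V × Fin m) → Fin t,
      ((∑ p : Fin h × Fin m × Fin t, |g ω x p - g ω y p|) ≤ (1 - C * ε) * T.dist x y) →
      K ≤ (P.filter (fun p => ω (T.pe x p.1, p.2) = ω (T.pe y p.1, p.2))).card := by
    intro ω hω
    set Z := (P.filter (fun p => ω (T.pe x p.1, p.2) = ω (T.pe y p.1, p.2))).card with hZ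
    have hω' : (d:ℝ) - (2/(m:ℝ)) * (Z:ℝ) ≤ (1 - C * ε) * T.dist x y := by
      rw [hZ, hdd, hP, hDf, hn0]
      rw [← T.norm_eq x y h m t hm0 hdx hdy ω]
      exact hω
    have hmr : (0:ℝ) < (m:ℝ) := by exact_mod_cast hm0
    rw [hdist] at hω'
    have h1 : C * ε * (d:ℝ) ≤ (2/(m:ℝ)) * (Z:ℝ) := by nlinarith [hω']
    have h2 := mul_le_mul_of_nonneg_right h1 (le_of_lt (by positivity : (0:ℝ) < (m:ℝ)/2))
    have h3 : (2/(m:ℝ)) * (Z:ℝ) * ((m:ℝ)/2) = (Z:ℝ) := by field_simp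
    rw [h3] at h2
    rw [hK]
    apply Nat.ceil_le.mpr
    linarith [h2]
  -- per-subset cardinality bound
  have hper : ∀ S ∈ Finset.powersetCard K P,
      ((Finset.univ.filter fun ω : (T.V × Fin m) → Fin t =>
        ∀ p ∈ S, ω (T.pe x p.1, p.2) = ω (T.pe y p.1, p.2)).card) ≤ t ^ (N - K) := by
    intro S hS
    obtain ⟨hSP, hScard⟩ := Finset.mem_powersetCard.mp hS
    have hmemP : ∀ p ∈ S, p.1 < n0 ∧ ¬ T.pe x p.1 = T.pe y p.1 := by
      intro p hp
      have h1 := hSP hp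
      rw [hP, Finset.mem_product] at h1
      have h2 := h1.1
      rw [hDf, Finset.mem_filter, Finset.mem_range] at h2
      exact h2
    set key2 : ℕ × Fin m → T.V × Fin m := fun p => (T.pe y p.1, p.2) with hkey2
    have hinj2 : Set.InjOn key2 S := by
      intro p hp q hq hpq
      have hp' := hmemP p (Finset.mem_coe.mp hp)
      have hq' := hmemP q (Finset.mem_coe.mp hq)
      have h1 : T.pe y p.1 = T.pe y q.1 := (Prod.ext_iff.mp hpq).1
      have h2 : p.2 = q.2 := (Prod.ext_iff.mp hpq).2
      have h3 : p.1 = q.1 := T.pe_inj (by omega) (by omega) h1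
      exact Prod.ext h3 h2
    set Q := S.image key2 with hQ
    have hQcard : Q.card = K := by
      rw [hQ, Finset.card_image_of_injOn hinj2, hScard]
    have hcount : Fintype.card ({a : T.V × Fin m // a ∉ Q} → Fin t) = t ^ (N - K) := by
      rw [Fintype.card_fun, Fintype.card_fin]
      congr 1
      rw [Fintype.card_subtype_compl, Fintype.card_coe, hQcard, Fintype.card_prod,
        Fintype.card_fin]
    rw [← hcount, ← Finset.card_univ]
    apply Finset.card_le_card_of_injOn (fun ω => (fun a => ω a.1))
    · intro ω _
      exact Finset.mem_univ _
    · intro ω hω ω' hω' hFF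
      rw [Finset.mem_coe, Finset.mem_filter] at hω hω'
      funext q
      by_cases hqQ : q ∈ Q
      · obtain ⟨p, hpS, hpq⟩ := Finset.mem_image.mp hqQ
        have hpP := hmemP p hpS
        have hk1Q : (T.pe x p.1, p.2) ∉ Q := by
          intro hcon
          obtain ⟨p', hp'S, hp'e⟩ := Finset.mem_image.mp hcon
          have hp'P := hmemP p' hp'S
          have h1 : T.pe y p'.1 = T.pe x p.1 := (Prod.ext_iff.mp hp'e).1
          have h3 : p'.1 = p.1 := T.pe_cross (by omega) (by omega) h1
          rw [h3] at h1
          exact hpP.2 h1.symm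
        have hgq := congrFun hFF (⟨(T.pe x p.1, p.2), hk1Q⟩ : {a : T.V × Fin m // a ∉ Q})
        simp only at hgq
        rw [← hpq]
        calc ω (key2 p) = ω (T.pe x p.1, p.2) := (hω.2 p hpS).symm
          _ = ω' (T.pe x p.1, p.2) := hgq
          _ = ω' (key2 p) := hω'.2 p hpS
      · have hq := congrFun hFF (⟨q, hqQ⟩ : {a : T.V × Fin m // a ∉ Q})
        simpa using hq
  -- event cardinality bound
  have hEcard : ((Finset.univ.filter fun ω : (T.V × Fin m) → Fin t =>
        (∑ p : Fin h × Fin m × Fin t, |g ω x p - g ω y p|) ≤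
          (1 - C * ε) * T.dist x y).card) ≤ (s * m).choose K * t ^ (N - K) := by
    have hsub : (Finset.univ.filter fun ω : (T.V × Fin m) → Fin t =>
        (∑ p : Fin h × Fin m × Fin t, |g ω x p - g ω y p|) ≤
          (1 - C * ε) * T.dist x y) ⊆
        (Finset.powersetCard K P).biUnion (fun S => Finset.univ.filter
          fun ω : (T.V × Fin m) → Fin t =>
            ∀ p ∈ S, ω (T.pe x p.1, p.2) = ω (T.pe y p.1, p.2)) := by
      intro ω hω
      rw [Finset.mem_filter] at hω
      have hKZ := hmem ω hω.2
      obtain ⟨S, hSsub, hScard⟩ := Finset.exists_subset_card_eq hKZ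
      rw [Finset.mem_biUnion]
      refine ⟨S, Finset.mem_powersetCard.mpr
        ⟨hSsub.trans (Finset.filter_subset _ _), hScard⟩, ?_⟩
      rw [Finset.mem_filter]
      exact ⟨Finset.mem_univ _, fun p hp => (Finset.mem_filter.mp (hSsub hp)).2⟩
    calc (Finset.univ.filter fun ω : (T.V × Fin m) → Fin t =>
        (∑ p : Fin h × Fin m × Fin t, |g ω x p - g ω y p|) ≤
          (1 - C * ε) * T.dist x y).card
        ≤ ((Finset.powersetCard K P).biUnion (fun S => Finset.univ.filter
          fun ω : (T.V × Fin m) → Fin t =>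
            ∀ p ∈ S, ω (T.pe x p.1, p.2) = ω (T.pe y p.1, p.2))).card :=
          Finset.card_le_card hsub
      _ ≤ ∑ S ∈ Finset.powersetCard K P, (Finset.univ.filter
          fun ω : (T.V × Fin m) → Fin t =>
            ∀ p ∈ S, ω (T.pe x p.1, p.2) = ω (T.pe y p.1, p.2)).card :=
          Finset.card_biUnion_le
      _ ≤ ∑ _S ∈ Finset.powersetCard K P, t ^ (N - K) := Finset.sum_le_sum hper
      _ = (Finset.powersetCard K P).card * t ^ (N - K) := by
          rw [Finset.sum_const, smul_eq_mul]
      _ = (s * m).choose K * t ^ (N - K) := by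
          rw [Finset.card_powersetCard, hP, Finset.card_product, hs]
          simp
  -- final numeric computation
  have hKr : C * ε * (d:ℝ) * (m:ℝ) / 2 ≤ (K:ℝ) := Nat.le_ceil _
  clear hmem hper hP hDf hn0 hLDf hn0x hn0y
  clear_value g d s N K P Df n0 m t
  rw [hcardfun]
  by_cases hd0 : d = 0
  · rw [hdist, hd0]
    have hexp0 : -(C * ((0:ℕ):ℝ) / 2) = 0 := by norm_num
    rw [hexp0, Real.rpow_zero]
    apply div_le_one_of_le₀
    · have hle := Finset.card_le_card (Finset.subset_univ
        (Finset.univ.filter fun ω : (T.V × Fin m) → Fin t =>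
          (∑ p : Fin h × Fin m × Fin t, |g ω x p - g ω y p|) ≤ (1 - C * ε) * ((0:ℕ):ℝ)))
      rw [Finset.card_univ, hcardfun] at hle
      exact_mod_cast hle
    · positivity
  have hd1 : 1 ≤ d := Nat.one_le_iff_ne_zero.mpr hd0
  have hdr1 : (1:ℝ) ≤ (d:ℝ) := by exact_mod_cast hd1
  have hmr1 : (1:ℝ) ≤ (m:ℝ) := by exact_mod_cast hm0
  have htr1 : (1:ℝ) ≤ (t:ℝ) := by exact_mod_cast ht0
  rcases lt_or_ge (s*m) K with hsmK | hKsm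
  · have h0 : ((Finset.univ.filter fun ω : (T.V × Fin m) → Fin t =>
        (∑ p : Fin h × Fin m × Fin t, |g ω x p - g ω y p|) ≤
          (1 - C * ε) * T.dist x y).card) = 0 := by
      have h1 := hEcard
      rw [Nat.choose_eq_zero_of_lt hsmK, zero_mul] at h1
      omega
    rw [h0]
    rw [Nat.cast_zero, zero_div]
    exact hRHSpos.le
  -- main chain
  have hKN : K ≤ N := le_trans hKsm (by rw [hN]; exact Nat.mul_le_mul_right m hsV)
  have hCpos : (0:ℝ) < C := by linarith
  have hK1 : 1 ≤ K := by
    rw [hK]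
    apply Nat.ceil_pos.mpr
    have : (0:ℝ) < C * ε * (d:ℝ) * (m:ℝ) / 2 := by positivity
    -- positivity may not see d>0; fallback
    exact this
  have hKr1 : (1:ℝ) ≤ (K:ℝ) := by exact_mod_cast hK1
  have htpos : (0:ℝ) < (t:ℝ) := by linarith
  have hKpos : (0:ℝ) < (K:ℝ) := by linarith
  -- step 1: probability ≤ choose / t^K
  have hstep1 : ((Finset.univ.filter fun ω : (T.V × Fin m) → Fin t =>
        (∑ p : Fin h × Fin m × Fin t, |g ω x p - g ω y p|) ≤
          (1 - C * ε) * T.dist x y).card : ℝ) / ((t:ℕ)^N : ℕ)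
      ≤ ((s*m).choose K : ℝ) / (t:ℝ)^K := by
    have htN : ((t:ℝ))^N = (t:ℝ)^(N-K) * (t:ℝ)^K := by
      rw [← pow_add, Nat.sub_add_cancel hKN]
    have hnum : ((Finset.univ.filter fun ω : (T.V × Fin m) → Fin t =>
        (∑ p : Fin h × Fin m × Fin t, |g ω x p - g ω y p|) ≤
          (1 - C * ε) * T.dist x y).card : ℝ) ≤ ((s*m).choose K : ℝ) * (t:ℝ)^(N-K) := by
      exact_mod_cast hEcard
    have hden : (((t:ℕ)^N : ℕ) : ℝ) = (t:ℝ)^(N-K) * (t:ℝ)^K := by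
      push_cast
      exact htN
    rw [hden]
    rw [div_le_div_iff₀ (by positivity) (by positivity)]
    calc ((Finset.univ.filter fun ω : (T.V × Fin m) → Fin t =>
        (∑ p : Fin h × Fin m × Fin t, |g ω x p - g ω y p|) ≤
          (1 - C * ε) * T.dist x y).card : ℝ) * (t:ℝ)^K
        ≤ (((s*m).choose K : ℝ) * (t:ℝ)^(N-K)) * (t:ℝ)^K := by
          apply mul_le_mul_of_nonneg_right hnum (by positivity)
      _ = ((s*m).choose K : ℝ) * ((t:ℝ)^(N-K) * (t:ℝ)^K) := by ring
  -- step 2: choose / t^K ≤ (sm * e / (K t))^K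
  have hstep2 : ((s*m).choose K : ℝ) / (t:ℝ)^K
      ≤ ((s*m:ℕ) * Real.exp 1 / ((K:ℝ) * t))^K := by
    have hc1 : ((s*m).choose K : ℝ) ≤ ((s*m : ℕ):ℝ)^K / (K.factorial : ℝ) := by
      have := Nat.choose_le_pow_div (α := ℝ) K (s*m)
      exact_mod_cast this
    have hfact : ((K:ℝ))^K ≤ (K.factorial : ℝ) * Real.exp K :=
      pow_self_le_factorial_mul_exp K
    have hexpK : (Real.exp 1)^K = Real.exp K := by
      rw [← Real.exp_nat_mul, mul_one]
    have hKfpos : (0:ℝ) < (K.factorial : ℝ) := by exact_mod_cast K.factorial_pos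
    have h2 : ((s*m).choose K : ℝ) / (t:ℝ)^K
        ≤ ((s*m : ℕ):ℝ)^K / ((K.factorial : ℝ) * (t:ℝ)^K) := by
      rw [div_le_div_iff₀ (by positivity) (by positivity)]
      calc ((s*m).choose K : ℝ) * ((K.factorial:ℝ) * (t:ℝ)^K)
          = (((s*m).choose K : ℝ) * (K.factorial:ℝ)) * (t:ℝ)^K := by ring
        _ ≤ (((s*m:ℕ):ℝ)^K / (K.factorial:ℝ) * (K.factorial:ℝ)) * (t:ℝ)^K := by
            apply mul_le_mul_of_nonneg_right _ (by positivity)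
            apply mul_le_mul_of_nonneg_right hc1 (by positivity)
        _ = ((s*m:ℕ):ℝ)^K * (t:ℝ)^K := by field_simp
    refine le_trans h2 ?_
    rw [div_pow, mul_pow, mul_pow]
    rw [div_le_div_iff₀ (by positivity) (by positivity)]
    calc ((s*m:ℕ):ℝ)^K * ((K:ℝ)^K * (t:ℝ)^K)
        ≤ ((s*m:ℕ):ℝ)^K * (((K.factorial:ℝ) * Real.exp K) * (t:ℝ)^K) := by
          apply mul_le_mul_of_nonneg_left _ (by positivity)
          apply mul_le_mul_of_nonneg_right hfact (by positivity)
      _ = ((s*m:ℕ):ℝ)^K * (Real.exp 1)^K * ((K.factorial:ℝ) * (t:ℝ)^K) := by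
          rw [hexpK]; ring
  -- step 3: base bound
  have hbase : ((s*m:ℕ):ℝ) * Real.exp 1 / ((K:ℝ) * t) ≤ Real.exp 1 / 10 := by
    have h10 : 10 * ((s*m:ℕ):ℝ) ≤ (K:ℝ) * t := by
      have hs2r : 2 * (s:ℝ) ≤ (d:ℝ) := by exact_mod_cast hs2
      have e1 : (10:ℝ) * ((s*m:ℕ):ℝ) ≤ 5 * ((d:ℝ) * (m:ℝ)) := by
        push_cast
        nlinarith [hs2r, hmr1]
      have e5 : (5:ℝ) ≤ (C/2) * (ε*t) := by nlinarith [hC, hεt]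
      have e2 : 5 * ((d:ℝ) * (m:ℝ)) ≤ ((C/2) * (ε*t)) * ((d:ℝ) * (m:ℝ)) := by
        apply mul_le_mul_of_nonneg_right e5 (by positivity)
      have e3 : ((C/2) * (ε*t)) * ((d:ℝ) * (m:ℝ)) = (C * ε * (d:ℝ) * (m:ℝ) / 2) * t := by
        ring
      have e4 : (C * ε * (d:ℝ) * (m:ℝ) / 2) * t ≤ (K:ℝ) * t := by
        apply mul_le_mul_of_nonneg_right hKr (by positivity)
      linarith
    rw [div_le_div_iff₀ (by positivity) (by norm_num)]
    nlinarith [Real.exp_pos 1, h10]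
  have hstep3 : (((s*m:ℕ):ℝ) * Real.exp 1 / ((K:ℝ) * t))^K ≤ (Real.exp 1 / 10)^K := by
    apply pow_le_pow_left₀ (by positivity) hbase
  -- step 4: (e/10)^K ≤ exp(-K)
  have hstep4 : (Real.exp 1 / 10)^K ≤ Real.exp (-(K:ℝ)) := by
    have h1 : Real.exp 1 / 10 ≤ Real.exp (-1) := by
      rw [Real.exp_neg, inv_eq_one_div]
      rw [div_le_div_iff₀ (by norm_num) (Real.exp_pos 1)]
      nlinarith [Real.exp_one_lt_d9, Real.exp_pos 1]
    calc (Real.exp 1 / 10)^K ≤ (Real.exp (-1))^K := by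
          apply pow_le_pow_left₀ (by positivity) h1
      _ = Real.exp (-(K:ℝ)) := by
          rw [← Real.exp_nat_mul]
          congr 1
          ring
  -- step 5: exp(-K) ≤ RHS
  have hstep5 : Real.exp (-(K:ℝ)) ≤ (k : ℝ) ^ (-(C * T.dist x y / 2)) := by
    rw [Real.rpow_def_of_pos hk0, hdist]
    apply Real.exp_le_exp.mpr
    have f1 : Real.log k ≤ ε * (m:ℝ) := by
      rw [hmt]
      push_cast
      nlinarith [mul_le_mul_of_nonneg_right hεt
        (le_trans hlogk.le hlogceil), hlogceil, hεt, hε.le]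
    have f2 : C * (d:ℝ) / 2 * Real.log k ≤ C * ε * (d:ℝ) * (m:ℝ) / 2 := by
      have h3 : C * (d:ℝ) / 2 * Real.log k ≤ C * (d:ℝ) / 2 * (ε * m) := by
        apply mul_le_mul_of_nonneg_left f1 (by positivity)
      linarith [h3]
    have : C * (d:ℝ) / 2 * Real.log k ≤ (K:ℝ) := le_trans f2 hKr
    nlinarith [this]
  calc ((Finset.univ.filter fun ω : (T.V × Fin m) → Fin t =>
        (∑ p : Fin h × Fin m × Fin t, |g ω x p - g ω y p|) ≤
          (1 - C * ε) * T.dist x y).card : ℝ) / ((t:ℕ)^N : ℕ)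
      ≤ ((s*m).choose K : ℝ) / (t:ℝ)^K := hstep1
    _ ≤ ((s*m:ℕ) * Real.exp 1 / ((K:ℝ) * t))^K := hstep2
    _ ≤ (Real.exp 1 / 10)^K := hstep3
    _ ≤ Real.exp (-(K:ℝ)) := hstep4
    _ ≤ (k : ℝ) ^ (-(C * T.dist x y / 2)) := hstep5


end
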